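/- For every nonzero vector z ∈ ℝ^m, the tangent space T(zz^T) of the rank-one matrix zz^T satisfies ξ(T(zz^T)) ≤ 2‖z‖_∞/‖z‖₂, where ‖z‖_∞ = max_i |z_i| and ‖z‖₂ is the Euclidean norm. -/

import Mathlib

open Matrix BigOperators
open scoped Classical

noncomputable section

/-- Spectral norm (largest singular value / ℓ²→ℓ² operator norm). -/
noncomputable def spec {n : Type*} [Fintype n] [DecidableEq n] (A : Matrix n n ℝ) : ℝ :=
  ‖Matrix.toEuclideanCLM (𝕜 := ℝ) A‖

/-- Euclidean norm of a vector. -/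
noncomputable def enorm {n : Type*} [Fintype n] (v : n → ℝ) : ℝ :=
  Real.sqrt (∑ i, v i ^ 2)

/-- Sup-norm of a vector (pi norm). -/
noncomputable def snorm {n : Type*} [Fintype n] (v : n → ℝ) : ℝ := ‖v‖

/-- Maximum absolute entry of a matrix. -/
noncomputable def entryMax {n : Type*} [Fintype n] (A : Matrix n n ℝ) : ℝ :=
  snorm (fun i => snorm (fun j => A i j))

/-- Membership of a matrix in the tangent space `T(zzᵀ) = {zxᵀ + yzᵀ : x, y}`. -/
def memT {n : Type*} (z : n → ℝ) (N : Matrix n n ℝ) : Prop :=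
  ∃ x y : n → ℝ, N = Matrix.of fun i j => z i * x j + y i * z j

/-- ξ(T(zzᵀ)) = max { max_{ij}|N_{ij}| : N ∈ T(zzᵀ), ‖N‖₂ ≤ 1 }. -/
noncomputable def xiT {n : Type*} [Fintype n] [DecidableEq n] (z : n → ℝ) : ℝ :=
  sSup {x | ∃ N : Matrix n n ℝ, memT z N ∧ spec N ≤ 1 ∧ x = entryMax N}

lemma enorm_eq {n : Type*} [Fintype n] (v : n → ℝ) :
    _root_.enorm v = ‖(WithLp.equiv 2 (n → ℝ)).symm v‖ := by
  rw [EuclideanSpace.norm_eq, _root_.enorm]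
  congr 1
  refine Finset.sum_congr rfl fun i _ => ?_
  rw [Real.norm_eq_abs, sq_abs]
  rfl

lemma enorm_nonneg' {n : Type*} [Fintype n] (v : n → ℝ) : 0 ≤ _root_.enorm v :=
  Real.sqrt_nonneg _

lemma enorm_mulVec_le {n : Type*} [Fintype n] [DecidableEq n] (A : Matrix n n ℝ) (u : n → ℝ) :
    _root_.enorm (A.mulVec u) ≤ spec A * _root_.enorm u := by
  rw [enorm_eq, enorm_eq]
  calc ‖(WithLp.equiv 2 (n → ℝ)).symm (A.mulVec u)‖
      = ‖Matrix.toEuclideanCLM (𝕜 := ℝ) A ((WithLp.equiv 2 (n → ℝ)).symm u)‖ := by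
        rw [WithLp.equiv_symm_apply, Matrix.toEuclideanCLM_toLp]
    _ ≤ spec A * ‖(WithLp.equiv 2 (n → ℝ)).symm u‖ :=
        (Matrix.toEuclideanCLM (𝕜 := ℝ) A).le_opNorm _

lemma abs_sum_mul_le {n : Type*} [Fintype n] (f g : n → ℝ) :
    |∑ i, f i * g i| ≤ _root_.enorm f * _root_.enorm g := by
  rw [← Real.sqrt_sq_eq_abs, _root_.enorm, _root_.enorm, ← Real.sqrt_mul (by positivity)]
  exact Real.sqrt_le_sqrt (Finset.sum_mul_sq_le_sq_mul_sq _ _ _)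

/-- For every nonzero `z ∈ ℝ^m`, `ξ(T(zzᵀ)) ≤ 2‖z‖_∞ / ‖z‖₂`. -/
theorem xi_tangent_space_bound (m : ℕ) (z : Fin m → ℝ) (hz : z ≠ 0) :
    xiT z ≤ 2 * snorm z / _root_.enorm z := by
  obtain ⟨i₀, hi₀⟩ := Function.ne_iff.mp hz
  have hi₀' : z i₀ ≠ 0 := by simpa using hi₀
  set S : ℝ := ∑ i, z i ^ 2 with hSdef
  have hS : 0 < S := Finset.sum_pos' (fun i _ => sq_nonneg _)
    ⟨i₀, Finset.mem_univ _, by positivity⟩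
  have hez : _root_.enorm z = Real.sqrt S := rfl
  have hezpos : 0 < _root_.enorm z := by rw [hez]; exact Real.sqrt_pos.mpr hS
  have hSsq : _root_.enorm z ^ 2 = S := by rw [hez]; exact Real.sq_sqrt hS.le
  have hB : 0 ≤ 2 * snorm z / _root_.enorm z := by
    apply div_nonneg _ hezpos.le
    have : (0:ℝ) ≤ snorm z := norm_nonneg _
    linarith
  refine Real.sSup_le ?_ hB
  rintro t ⟨N, ⟨x, y, hN⟩, hspec, rfl⟩
  have key : ∀ i j, |N i j| ≤ 2 * snorm z / _root_.enorm z := by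
    intro i j
    set b : ℝ := (∑ k, y k * z k) / S with hbdef
    set a : ℝ := (∑ k, x k * z k) / S with hadef
    set w : Fin m → ℝ := fun j => (∑ k, z k * N k j) / S with hwdef
    set v : Fin m → ℝ := fun i => y i - b * z i with hvdef
    have hNentry : ∀ i j, N i j = z i * x j + y i * z j := by
      intro i j; rw [hN]; rfl
    have hwval : ∀ j, w j = x j + b * z j := by
      intro j
      have hsum : ∑ k, z k * N k j = (∑ k, z k ^ 2) * x j + (∑ k, y k * z k) * z j := by
        rw [Finset.sum_mul, Finset.sum_mul, ← Finset.sum_add_distrib]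
        exact Finset.sum_congr rfl fun k _ => by rw [hNentry]; ring
      have : w j = ((∑ k, z k ^ 2) * x j + (∑ k, y k * z k) * z j) / S := by
        rw [hwdef]; simp only; rw [hsum]
      rw [this, ← hSdef, hbdef]
      field_simp
    have hdecomp : N i j = z i * w j + v i * z j := by
      rw [hwval, hvdef, hNentry]; ring
    -- bound on w
    have hw : |w j| ≤ 1 / _root_.enorm z := by
      set e : Fin m → ℝ := Pi.single j 1 with hedef
      have hcol : (fun k => N k j) = N.mulVec e := by
        funext k
        have h0 : N.mulVec e k = ∑ l, N k l * e l := rfl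
        rw [h0, hedef]
        simp [Pi.single_apply]
      have hcolnorm : _root_.enorm (fun k => N k j) ≤ 1 := by
        rw [hcol]
        have h1 : _root_.enorm e = 1 := by
          rw [_root_.enorm]
          have : ∑ k, (e k) ^ 2 = 1 := by
            simp [hedef, Pi.single_apply]
          rw [this, Real.sqrt_one]
        calc _root_.enorm (N.mulVec e) ≤ spec N * _root_.enorm e :=
              enorm_mulVec_le _ _
          _ ≤ 1 * 1 := by
              rw [h1]
              exact mul_le_mul_of_nonneg_right hspec (by norm_num)
          _ = 1 := one_mul 1
      have hCS : |∑ k, z k * N k j| ≤ _root_.enorm z * 1 := by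
        refine le_trans (abs_sum_mul_le z _) ?_
        exact mul_le_mul_of_nonneg_left hcolnorm hezpos.le
      rw [hwdef]
      rw [abs_div, abs_of_pos hS]
      rw [div_le_div_iff₀ hS hezpos]
      calc |∑ k, z k * N k j| * _root_.enorm z ≤ (_root_.enorm z * 1) * _root_.enorm z :=
            mul_le_mul_of_nonneg_right hCS (enorm_nonneg' _)
        _ = 1 * S := by rw [← hSsq]; ring
    -- bound on v
    have hv : |v i| ≤ 1 / _root_.enorm z := by
      set g : Fin m → ℝ := fun i => a * z i + y i with hgdef
      have hmul : N.mulVec z = fun i => S * g i := by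
        funext i
        have h0 : N.mulVec z i = ∑ j, N i j * z j := rfl
        have h1 : ∑ j, N i j * z j = (∑ j, x j * z j) * z i + (∑ j, z j ^ 2) * y i := by
          rw [Finset.sum_mul, Finset.sum_mul, ← Finset.sum_add_distrib]
          exact Finset.sum_congr rfl fun k _ => by rw [hNentry]; ring
        rw [h0, h1, ← hSdef]
        simp only [hgdef, hadef]
        field_simp
      have hgnorm : _root_.enorm g ≤ 1 / _root_.enorm z := by
        have h1 : _root_.enorm (N.mulVec z) ≤ _root_.enorm z := by
          calc _root_.enorm (N.mulVec z) ≤ spec N * _root_.enorm z := enorm_mulVec_le _ _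
            _ ≤ 1 * _root_.enorm z := mul_le_mul_of_nonneg_right hspec (enorm_nonneg' _)
            _ = _root_.enorm z := one_mul _
        have h2 : _root_.enorm (N.mulVec z) = S * _root_.enorm g := by
          rw [hmul, _root_.enorm, _root_.enorm]
          rw [show ∑ i, (S * g i) ^ 2 = S^2 * ∑ i, g i ^ 2 by
            rw [Finset.mul_sum]; exact Finset.sum_congr rfl fun k _ => by ring]
          rw [Real.sqrt_mul (by positivity), Real.sqrt_sq hS.le]
        rw [h2] at h1
        calc _root_.enorm g = (S * _root_.enorm g) / S := by field_simp
          _ ≤ _root_.enorm z / S := by gcongr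
          _ = 1 / _root_.enorm z := by
              rw [← hSsq, sq]
              field_simp
      have hgv : ∀ k, g k = v k + (a + b) * z k := by
        intro k; rw [hgdef, hvdef]; ring
      have hvz : ∑ k, v k * z k = 0 := by
        simp only [hvdef]
        rw [show ∑ k, (y k - b * z k) * z k = (∑ k, y k * z k) - b * S by
          rw [hSdef, Finset.mul_sum, ← Finset.sum_sub_distrib]
          exact Finset.sum_congr rfl fun k _ => by ring]
        rw [hbdef]; field_simp; ring
      have hsum : ∑ k, v k ^ 2 ≤ ∑ k, g k ^ 2 := by
        have hexp : ∑ k, g k ^ 2 = ∑ k, v k ^ 2 + (a+b)^2 * S := by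
          simp only [hgv]
          rw [hSdef, Finset.mul_sum, ← Finset.sum_add_distrib]
          rw [show ∑ k, (v k + (a + b) * z k) ^ 2
              = ∑ k, ((v k ^2 + (a+b)^2 * z k ^2) + (2*(a+b)) * (v k * z k)) from
            Finset.sum_congr rfl fun k _ => by ring]
          rw [Finset.sum_add_distrib, ← Finset.mul_sum, hvz]
          rw [Finset.sum_add_distrib]
          ring
        nlinarith [sq_nonneg (a+b), hS.le]
      calc |v i| = Real.sqrt (v i ^ 2) := (Real.sqrt_sq_eq_abs _).symm
        _ ≤ Real.sqrt (∑ k, g k ^2) := by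
            apply Real.sqrt_le_sqrt
            refine le_trans ?_ hsum
            exact Finset.single_le_sum (f := fun k => v k ^ 2)
              (fun k _ => sq_nonneg _) (Finset.mem_univ i)
        _ ≤ 1 / _root_.enorm z := hgnorm
    calc |N i j| = |z i * w j + v i * z j| := by rw [hdecomp]
      _ ≤ |z i| * |w j| + |v i| * |z j| := by
          refine le_trans (abs_add_le _ _) ?_
          rw [abs_mul, abs_mul]
      _ ≤ snorm z * (1 / _root_.enorm z) + (1 / _root_.enorm z) * snorm z := by
          have hzi : |z i| ≤ snorm z := by
            simpa [Real.norm_eq_abs, snorm] using norm_le_pi_norm z i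
          have hzj : |z j| ≤ snorm z := by
            simpa [Real.norm_eq_abs, snorm] using norm_le_pi_norm z j
          have h1 : |z i| * |w j| ≤ snorm z * (1 / _root_.enorm z) :=
            mul_le_mul hzi hw (abs_nonneg _) (le_trans (abs_nonneg _) hzi)
          have h2 : |v i| * |z j| ≤ (1 / _root_.enorm z) * snorm z :=
            mul_le_mul hv hzj (abs_nonneg _) (by positivity)
          linarith
      _ = 2 * snorm z / _root_.enorm z := by field_simp; ring
  have hEM : entryMax N = ‖(fun i => ‖(fun j => N i j)‖)‖ := rfl
  rw [hEM, pi_norm_le_iff_of_nonneg hB]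
  intro i
  rw [Real.norm_eq_abs, abs_of_nonneg (norm_nonneg _), pi_norm_le_iff_of_nonneg hB]
  intro j
  rw [Real.norm_eq_abs]
  exact key i j
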